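/- Exponential weighting regret with time-varying learning rate: Let I be a finite nonempty set and let c_t : I -> [0,1] for t = 1,...,T. Let eta_t = 1/sqrt(t), let C_t(i) = sum_{s<=t} c_s(i), and let the algorithm play distribution p_t(i) proportional to exp(-eta_t * C_{t-1}(i)). Then sum_{t=1}^T sum_i p_t(i) c_t(i) - min_{i in I} sum_{t=1}^T c_t(i) <= (ln|I|)/eta_T + (ln|I|)*sum_{t=2}^T (1/eta_t - 1/eta_{t-1}) + sum_{t=1}^T eta_t/8, which is at most 2*(ln|I|)*sqrt(T) + sqrt(T)/4 + ln|I|. -/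

import Mathlib

section REW
open Real Finset

private lemma denom_pos {μ : ℝ} (hμ0 : 0 ≤ μ) (hμ1 : μ ≤ 1) (x : ℝ) :
    0 < 1 - μ + μ * Real.exp x := by
  rcases le_or_gt 1 (Real.exp x) with h | h
  · nlinarith [mul_le_mul_of_nonneg_left h hμ0]
  · nlinarith [Real.exp_pos x, mul_nonneg (sub_nonneg.2 hμ1) (sub_nonneg.2 h.le)]

private lemma hoeffding_core {μ : ℝ} (hμ0 : 0 ≤ μ) (hμ1 : μ ≤ 1) (lam : ℝ) :
    1 - μ + μ * Real.exp lam ≤ Real.exp (lam * μ + lam ^ 2 / 8) := by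
  set G : ℝ → ℝ := fun x => μ + x / 4 - μ * Real.exp x / (1 - μ + μ * Real.exp x) with hGdef
  set F : ℝ → ℝ := fun x => x * μ + x ^ 2 / 8 - Real.log (1 - μ + μ * Real.exp x) with hFdef
  have hd : ∀ x : ℝ, 0 < 1 - μ + μ * Real.exp x := denom_pos hμ0 hμ1
  have hnum : ∀ x : ℝ, HasDerivAt (fun x => μ * Real.exp x) (μ * Real.exp x) x :=
    fun x => (Real.hasDerivAt_exp x).const_mul μ
  have hden : ∀ x : ℝ, HasDerivAt (fun x => 1 - μ + μ * Real.exp x) (μ * Real.exp x) x :=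
    fun x => (hnum x).const_add (1 - μ)
  have hq : ∀ x : ℝ, HasDerivAt (fun x => μ * Real.exp x / (1 - μ + μ * Real.exp x))
      ((μ * Real.exp x * (1 - μ + μ * Real.exp x) - μ * Real.exp x * (μ * Real.exp x)) /
        (1 - μ + μ * Real.exp x) ^ 2) x :=
    fun x => (hnum x).div (hden x) (hd x).ne'
  have hG : ∀ x : ℝ, HasDerivAt G
      (1 / 4 - (μ * Real.exp x * (1 - μ + μ * Real.exp x) - μ * Real.exp x * (μ * Real.exp x)) /
        (1 - μ + μ * Real.exp x) ^ 2) x :=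
    fun x => (((hasDerivAt_id x).div_const 4).const_add μ).sub (hq x)
  have hGderiv_nonneg : ∀ x : ℝ, 0 ≤ 1 / 4 -
      (μ * Real.exp x * (1 - μ + μ * Real.exp x) - μ * Real.exp x * (μ * Real.exp x)) /
        (1 - μ + μ * Real.exp x) ^ 2 := by
    intro x
    rw [sub_nonneg, div_le_iff₀ (pow_pos (hd x) 2)]
    nlinarith [sq_nonneg (1 - μ - μ * Real.exp x), Real.exp_pos x]
  have hGmono : Monotone G :=
    monotone_of_deriv_nonneg (fun x => (hG x).differentiableAt)
      (fun x => by rw [(hG x).deriv]; exact hGderiv_nonneg x)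
  have hG0 : G 0 = 0 := by
    have h1 : 1 - μ + μ * Real.exp 0 = 1 := by rw [Real.exp_zero]; ring
    simp only [hGdef, Real.exp_zero, mul_one]
    rw [show 1 - μ + μ = (1:ℝ) by ring]
    simp
  have hF : ∀ x : ℝ, HasDerivAt F (G x) x := by
    intro x
    have h1 : HasDerivAt (fun x : ℝ => x * μ) (1 * μ) x := (hasDerivAt_id x).mul_const μ
    have h2 : HasDerivAt (fun x : ℝ => x ^ 2 / 8) ((2 * x ^ 1) / 8) x :=
      (hasDerivAt_pow 2 x).div_const 8
    have h3 : HasDerivAt (fun x => Real.log (1 - μ + μ * Real.exp x))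
        (μ * Real.exp x / (1 - μ + μ * Real.exp x)) x := (hden x).log (hd x).ne'
    have := ((h1.add h2).sub h3)
    refine this.congr_deriv ?_
    show _ = μ + x / 4 - μ * Real.exp x / (1 - μ + μ * Real.exp x); ring
  have hF0 : F 0 = 0 := by
    simp only [hFdef, Real.exp_zero, mul_one]
    rw [show 1 - μ + μ = (1:ℝ) by ring]
    simp
  have hFnonneg : ∀ x : ℝ, 0 ≤ F x := by
    intro x
    have hdiff : Differentiable ℝ F := fun x => (hF x).differentiableAt
    rcases le_total 0 x with hx | hx
    · have hmono : MonotoneOn F (Set.Ici 0) := by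
        apply monotoneOn_of_deriv_nonneg (convex_Ici 0) hdiff.continuous.continuousOn
          (hdiff.differentiableOn)
        intro y hy
        rw [interior_Ici] at hy
        rw [(hF y).deriv, ← hG0]
        exact hGmono (le_of_lt hy)
      have := hmono (Set.self_mem_Ici) (Set.mem_Ici.2 hx) hx
      rwa [hF0] at this
    · have hanti : AntitoneOn F (Set.Iic 0) := by
        apply antitoneOn_of_deriv_nonpos (convex_Iic 0) hdiff.continuous.continuousOn
          (hdiff.differentiableOn)
        intro y hy
        rw [interior_Iic] at hy
        rw [(hF y).deriv, ← hG0]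
        exact hGmono (le_of_lt hy)
      have := hanti (Set.mem_Iic.2 hx) (Set.self_mem_Iic) hx
      rwa [hF0] at this
  have := hFnonneg lam
  simp only [hFdef] at this
  have hlog : Real.log (1 - μ + μ * Real.exp lam) ≤ lam * μ + lam ^ 2 / 8 := by linarith
  exact (Real.log_le_iff_le_exp (hd lam)).1 hlog


private lemma hoeffding_sum {I : Type*} [Fintype I] (p c : I → ℝ)
    (hp0 : ∀ i, 0 ≤ p i) (hp1 : ∑ i, p i = 1)
    (hc0 : ∀ i, 0 ≤ c i) (hc1 : ∀ i, c i ≤ 1) (lam : ℝ) :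
    ∑ i, p i * Real.exp (lam * c i) ≤ Real.exp (lam * (∑ i, p i * c i) + lam ^ 2 / 8) := by
  have hμ0 : 0 ≤ ∑ i, p i * c i :=
    Finset.sum_nonneg fun i _ => mul_nonneg (hp0 i) (hc0 i)
  have hμ1 : (∑ i, p i * c i) ≤ 1 := by
    rw [← hp1]
    exact Finset.sum_le_sum fun i _ => by nlinarith [hp0 i, hc0 i, hc1 i]
  have step : ∀ i, Real.exp (lam * c i) ≤ 1 - c i + c i * Real.exp lam := by
    intro i
    have h := convexOn_exp.2 (Set.mem_univ (0:ℝ)) (Set.mem_univ lam)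
      (show (0:ℝ) ≤ 1 - c i by linarith [hc1 i]) (hc0 i)
      (show 1 - c i + c i = 1 by ring)
    simp only [smul_eq_mul, mul_zero, zero_add, Real.exp_zero, mul_one] at h
    calc Real.exp (lam * c i) = Real.exp (c i * lam) := by rw [mul_comm]
      _ ≤ 1 - c i + c i * Real.exp lam := by linarith
  calc ∑ i, p i * Real.exp (lam * c i)
      ≤ ∑ i, p i * (1 - c i + c i * Real.exp lam) :=
        Finset.sum_le_sum fun i _ => mul_le_mul_of_nonneg_left (step i) (hp0 i)
    _ = 1 - (∑ i, p i * c i) + (∑ i, p i * c i) * Real.exp lam := by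
        simp only [mul_add, mul_sub, mul_one, Finset.sum_add_distrib, Finset.sum_sub_distrib,
          ← Finset.sum_mul, hp1, ← mul_assoc]
    _ ≤ _ := hoeffding_core hμ0 hμ1 lam

private lemma softmin_mono {I : Type*} [Fintype I] [Nonempty I] (Cv : I → ℝ)
    {a b : ℝ} (ha : 0 < a) (hab : a ≤ b) :
    (1 / a) * Real.log ((∑ i, Real.exp (-a * Cv i)) / (Fintype.card I)) ≤
    (1 / b) * Real.log ((∑ i, Real.exp (-b * Cv i)) / (Fintype.card I)) := by
  have hb : 0 < b := lt_of_lt_of_le ha hab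
  have hn : (0:ℝ) < Fintype.card I := by
    exact_mod_cast Fintype.card_pos
  have hMa : (0:ℝ) < (∑ i, Real.exp (-a * Cv i)) / (Fintype.card I) := by positivity
  have hMb : (0:ℝ) < (∑ i, Real.exp (-b * Cv i)) / (Fintype.card I) := by positivity
  have hp : (1:ℝ) ≤ b / a := (one_le_div ha).2 hab
  have jensen := Real.rpow_arith_mean_le_arith_mean_rpow Finset.univ
    (fun _ : I => 1 / (Fintype.card I : ℝ)) (fun i => Real.exp (-a * Cv i))
    (fun i _ => by positivity)
    (by rw [Finset.sum_const, Finset.card_univ, nsmul_eq_mul]; field_simp)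
    (fun i _ => (Real.exp_pos _).le) hp
  have hz : ∀ i : I, Real.exp (-a * Cv i) ^ (b / a) = Real.exp (-b * Cv i) := by
    intro i
    rw [Real.rpow_def_of_pos (Real.exp_pos _), Real.log_exp]
    congr 1
    field_simp
  simp only [hz] at jensen
  have hsum : ∀ (g : I → ℝ), ∑ i, (1 / (Fintype.card I : ℝ)) * g i = (∑ i, g i) / (Fintype.card I) := by
    intro g
    rw [← Finset.mul_sum]
    ring
  rw [hsum, hsum] at jensen
  have hlog := Real.log_le_log (Real.rpow_pos_of_pos hMa _) jensen
  rw [Real.log_rpow hMa] at hlog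
  calc (1 / a) * Real.log ((∑ i, Real.exp (-a * Cv i)) / (Fintype.card I))
      = (1 / b) * ((b / a) * Real.log ((∑ i, Real.exp (-a * Cv i)) / (Fintype.card I))) := by
        field_simp
    _ ≤ (1 / b) * Real.log ((∑ i, Real.exp (-b * Cv i)) / (Fintype.card I)) :=
        mul_le_mul_of_nonneg_left hlog (by positivity)


private lemma telescope_Icc1 (g : ℕ → ℝ) (T : ℕ) :
    ∑ t ∈ Finset.Icc 1 T, (g (t - 1) - g t) = g 0 - g T := by
  rw [← Finset.Ico_add_one_right_eq_Icc, Finset.sum_Ico_eq_sum_range]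
  have h1 : T + 1 - 1 = T := by omega
  rw [h1]
  have h2 : ∀ i ∈ Finset.range T, g (1 + i - 1) - g (1 + i) = g i - g (i + 1) := by
    intro i _
    congr 2 <;> omega
  rw [Finset.sum_congr rfl h2, Finset.sum_range_sub' g T]

private lemma telescope_Icc2 (g : ℕ → ℝ) (T : ℕ) (hT : 1 ≤ T) :
    ∑ t ∈ Finset.Icc 2 T, (g t - g (t - 1)) = g T - g 1 := by
  rw [← Finset.Ico_add_one_right_eq_Icc, Finset.sum_Ico_eq_sum_range]
  have h1 : T + 1 - 2 = T - 1 := by omega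
  rw [h1]
  have h2 : ∀ i ∈ Finset.range (T - 1), g (2 + i) - g (2 + i - 1) = g (i + 1 + 1) - g (i + 1) := by
    intro i _
    congr 2 <;> omega
  rw [Finset.sum_congr rfl h2, Finset.sum_range_sub (fun i => g (i + 1)) (T - 1)]
  congr 2
  omega



theorem stmt_11 {I : Type*} [Fintype I] [Nonempty I] (T : ℕ) (hT : 1 ≤ T)
    (c : ℕ → I → ℝ) (hc : ∀ t i, 0 ≤ c t i ∧ c t i ≤ 1)
    (η : ℕ → ℝ) (hη : ∀ t : ℕ, 1 ≤ t → η t = 1 / Real.sqrt t)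
    (C : ℕ → I → ℝ) (hC : ∀ t i, C t i = ∑ s ∈ Finset.Icc 1 t, c s i)
    (p : ℕ → I → ℝ)
    (hp : ∀ t i, p t i =
      Real.exp (-(η t) * C (t - 1) i) / ∑ j, Real.exp (-(η t) * C (t - 1) j)) :
    ((∑ t ∈ Finset.Icc 1 T, ∑ i, p t i * c t i) -
        Finset.univ.inf' Finset.univ_nonempty (fun i => C T i) ≤
      Real.log (Fintype.card I) / η T +
        Real.log (Fintype.card I) * ∑ t ∈ Finset.Icc 2 T, (1 / η t - 1 / η (t - 1)) +
        ∑ t ∈ Finset.Icc 1 T, η t / 8) ∧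
    (Real.log (Fintype.card I) / η T +
        Real.log (Fintype.card I) * ∑ t ∈ Finset.Icc 2 T, (1 / η t - 1 / η (t - 1)) +
        ∑ t ∈ Finset.Icc 1 T, η t / 8 ≤
      2 * Real.log (Fintype.card I) * Real.sqrt T + Real.sqrt T / 4 +
        Real.log (Fintype.card I)) := by
  set L : ℝ := Real.log (Fintype.card I) with hLdef
  have hn : (0:ℝ) < Fintype.card I := by exact_mod_cast Fintype.card_pos
  have hL0 : 0 ≤ L := Real.log_nonneg (by exact_mod_cast Fintype.card_pos)
  have hsqrtpos : ∀ t : ℕ, 1 ≤ t → (0:ℝ) < Real.sqrt t := by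
    intro t ht
    apply Real.sqrt_pos.2
    exact_mod_cast Nat.pos_of_ne_zero (by omega)
  have hηpos : ∀ t : ℕ, 1 ≤ t → 0 < η t := by
    intro t ht
    rw [hη t ht]
    positivity
  have hinv : ∀ t : ℕ, 1 ≤ t → 1 / η t = Real.sqrt t := by
    intro t ht
    rw [hη t ht, one_div_one_div]
  have hη1 : η 1 = 1 := by
    rw [hη 1 le_rfl]
    norm_num
  have hC0 : ∀ i, C 0 i = 0 := by
    intro i
    rw [hC]
    simp
  have hCstep : ∀ t : ℕ, 1 ≤ t → ∀ i, C t i = C (t - 1) i + c t i := by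
    intro t ht i
    rw [hC, hC]
    have h1 : t = (t - 1) + 1 := by omega
    rw [h1, Finset.sum_Icc_succ_top (by omega)]
    simp
  have hWpos : ∀ (t : ℕ) (e : ℝ), (0:ℝ) < ∑ i, Real.exp (-e * C t i) :=
    fun t e => Finset.sum_pos (fun i _ => Real.exp_pos _) Finset.univ_nonempty
  set ψ : ℕ → ℝ := fun t =>
    if t = 0 then L else (1 / η t) * Real.log (∑ i, Real.exp (-(η t) * C t i)) with hψdef
  have hψ0 : ψ 0 = L := by simp [hψdef]
  -- per-step bound
  have step : ∀ t : ℕ, 1 ≤ t →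
      ∑ i, p t i * c t i ≤ ψ (t - 1) - ψ t +
        L * (if t = 1 then 0 else (1 / η t - 1 / η (t - 1))) + η t / 8 := by
    intro t ht
    have ha : 0 < η t := hηpos t ht
    set S : ℝ := ∑ j, Real.exp (-(η t) * C (t - 1) j) with hSdef
    have hS : 0 < S := hWpos (t - 1) (η t)
    have hp0 : ∀ i, 0 ≤ p t i := by
      intro i
      rw [hp]
      positivity
    have hp1 : ∑ i, p t i = 1 := by
      simp_rw [hp t]
      rw [← Finset.sum_div, div_self hS.ne']
    set μ : ℝ := ∑ i, p t i * c t i with hμdef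
    have hoeff := hoeffding_sum (p t) (c t) hp0 hp1 (fun i => (hc t i).1) (fun i => (hc t i).2)
      (-(η t))
    have hX : 0 < ∑ i, p t i * Real.exp (-(η t) * c t i) := by
      apply Finset.sum_pos _ Finset.univ_nonempty
      intro i _
      apply mul_pos _ (Real.exp_pos _)
      rw [hp]
      positivity
    have key : (∑ i, Real.exp (-(η t) * C t i)) =
        S * ∑ i, p t i * Real.exp (-(η t) * c t i) := by
      rw [Finset.mul_sum]
      apply Finset.sum_congr rfl
      intro i _
      rw [hp t i, hCstep t ht i,
        show -(η t) * (C (t - 1) i + c t i) = (-(η t) * C (t - 1) i) + (-(η t) * c t i) by ring,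
        Real.exp_add, ← hSdef]
      field_simp
    have hlog : Real.log (∑ i, Real.exp (-(η t) * C t i)) ≤
        Real.log S + (-(η t) * μ + (η t) ^ 2 / 8) := by
      rw [key, Real.log_mul hS.ne' hX.ne']
      have h1 := Real.log_le_log hX hoeff
      rw [Real.log_exp] at h1
      have h2 : (-(η t)) ^ 2 = (η t) ^ 2 := by ring
      rw [h2] at h1
      linarith
    have hψt : ψ t = (1 / η t) * Real.log (∑ i, Real.exp (-(η t) * C t i)) := by
      simp [hψdef, show t ≠ 0 by omega]
    have hstep1 : μ ≤ (1 / η t) * Real.log S - ψ t + η t / 8 := by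
      rw [hψt]
      have h3 : η t * μ ≤ Real.log S - Real.log (∑ i, Real.exp (-(η t) * C t i))
          + (η t) ^ 2 / 8 := by linarith [hlog]
      have h4 : μ ≤ (Real.log S - Real.log (∑ i, Real.exp (-(η t) * C t i))
          + (η t) ^ 2 / 8) / η t := by
        rw [le_div_iff₀ ha]
        linarith [h3]
      have h5 : (Real.log S - Real.log (∑ i, Real.exp (-(η t) * C t i))
          + (η t) ^ 2 / 8) / η t = (1 / η t) * Real.log S
          - (1 / η t) * Real.log (∑ i, Real.exp (-(η t) * C t i)) + η t / 8 := by
        field_simp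
      rw [h5] at h4
      linarith
    by_cases ht1 : t = 1
    · subst ht1
      have hS1 : S = (Fintype.card I : ℝ) := by
        rw [hSdef]
        simp [hC0]
      rw [if_pos rfl]
      have hLS : (1 / η 1) * Real.log S = L := by
        rw [hS1, hη1, hLdef]
        norm_num
      simp only [show (1:ℕ) - 1 = 0 from rfl, hψ0]
      linarith [hstep1, hLS]
    · have ht1' : 1 ≤ t - 1 := by omega
      have hb : 0 < η (t - 1) := hηpos (t - 1) ht1'
      have hab : η t ≤ η (t - 1) := by
        rw [hη t ht, hη (t - 1) ht1']
        apply one_div_le_one_div_of_le (hsqrtpos (t - 1) ht1')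
        apply Real.sqrt_le_sqrt
        exact_mod_cast Nat.sub_le t 1
      have hmono := softmin_mono (C (t - 1)) ha hab
      have hW' : 0 < ∑ i, Real.exp (-(η (t - 1)) * C (t - 1) i) := hWpos _ _
      rw [Real.log_div hS.ne' hn.ne', Real.log_div hW'.ne' hn.ne', ← hLdef] at hmono
      have hψt1 : ψ (t - 1) = (1 / η (t - 1)) *
          Real.log (∑ i, Real.exp (-(η (t - 1)) * C (t - 1) i)) := by
        simp [hψdef, show t - 1 ≠ 0 by omega]
      rw [if_neg ht1]
      have hexp : (1 / η t) * Real.log S ≤ ψ (t - 1) + (1 / η t - 1 / η (t - 1)) * L := by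
        rw [hψt1]
        linarith [hmono]
      linarith [hstep1, hexp]
  -- sum the per-step bounds
  have hIcc : Finset.Icc 1 T = insert 1 (Finset.Icc 2 T) := by
    ext x
    simp only [Finset.mem_Icc, Finset.mem_insert]
    omega
  have hiftsum : ∑ t ∈ Finset.Icc 1 T, (if t = 1 then (0:ℝ) else (1 / η t - 1 / η (t - 1))) =
      ∑ t ∈ Finset.Icc 2 T, (1 / η t - 1 / η (t - 1)) := by
    rw [hIcc, Finset.sum_insert (by simp), if_pos rfl, zero_add]
    apply Finset.sum_congr rfl
    intro x hx
    rw [if_neg (by simp only [Finset.mem_Icc] at hx; omega)]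
  have hsum : (∑ t ∈ Finset.Icc 1 T, ∑ i, p t i * c t i) ≤
      (L - ψ T) + L * (∑ t ∈ Finset.Icc 2 T, (1 / η t - 1 / η (t - 1))) +
        ∑ t ∈ Finset.Icc 1 T, η t / 8 := by
    have h1 : (∑ t ∈ Finset.Icc 1 T, ∑ i, p t i * c t i) ≤
        ∑ t ∈ Finset.Icc 1 T, (ψ (t - 1) - ψ t +
          L * (if t = 1 then 0 else (1 / η t - 1 / η (t - 1))) + η t / 8) :=
      Finset.sum_le_sum (fun t ht => step t (Finset.mem_Icc.1 ht).1)
    rw [Finset.sum_add_distrib, Finset.sum_add_distrib, telescope_Icc1 ψ T,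
      ← Finset.mul_sum, hiftsum, hψ0] at h1
    exact h1
  -- lower bound on ψ T via the minimum
  obtain ⟨i₀, _, hmin⟩ := Finset.exists_mem_eq_inf' Finset.univ_nonempty (fun i => C T i)
  have haT : 0 < η T := hηpos T hT
  have hψT : -(Finset.univ.inf' Finset.univ_nonempty fun i => C T i) ≤ ψ T := by
    have hWT : 0 < ∑ i, Real.exp (-(η T) * C T i) := hWpos T (η T)
    have h1 : Real.exp (-(η T) * C T i₀) ≤ ∑ i, Real.exp (-(η T) * C T i) :=
      Finset.single_le_sum (f := fun i => Real.exp (-(η T) * C T i))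
        (fun i _ => (Real.exp_pos _).le) (Finset.mem_univ i₀)
    have h2 : -(η T) * C T i₀ ≤ Real.log (∑ i, Real.exp (-(η T) * C T i)) :=
      (Real.le_log_iff_exp_le hWT).2 h1
    have hψTdef : ψ T = (1 / η T) * Real.log (∑ i, Real.exp (-(η T) * C T i)) := by
      simp [hψdef, show T ≠ 0 by omega]
    rw [hψTdef, hmin]
    calc -(C T i₀) = (1 / η T) * (-(η T) * C T i₀) := by
          field_simp
      _ ≤ _ := mul_le_mul_of_nonneg_left h2 (one_div_pos.2 haT).le
  have hsqT1 : (1:ℝ) ≤ Real.sqrt T := by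
    rw [show (1:ℝ) = Real.sqrt 1 by simp]
    apply Real.sqrt_le_sqrt
    exact_mod_cast hT
  have hdiv : L / η T = L * Real.sqrt T := by
    rw [hη T hT, div_div_eq_mul_div, div_one]
  set f : ℕ → ℝ := fun k => Real.sqrt k with hfdef
  have hS2 : ∑ t ∈ Finset.Icc 2 T, (1 / η t - 1 / η (t - 1)) = Real.sqrt T - 1 := by
    have hcong : ∀ t ∈ Finset.Icc 2 T, (1 / η t - 1 / η (t - 1)) = f t - f (t - 1) := by
      intro t htm
      simp only [Finset.mem_Icc] at htm
      rw [hinv t (by omega), hinv (t - 1) (by omega), hfdef]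
    rw [Finset.sum_congr rfl hcong, telescope_Icc2 f T hT]
    simp [hfdef]
  have hS3 : ∑ t ∈ Finset.Icc 1 T, η t / 8 ≤ Real.sqrt T / 4 := by
    have hterm : ∀ t ∈ Finset.Icc 1 T, η t / 8 ≤ (f t - f (t - 1)) / 4 := by
      intro t htm
      simp only [Finset.mem_Icc] at htm
      have ht1 : 1 ≤ t := htm.1
      rw [hη t ht1, hfdef]
      set a : ℝ := Real.sqrt t with hadef
      set b : ℝ := Real.sqrt ((t - 1 : ℕ)) with hbdef
      have ha2 : a ^ 2 = (t : ℝ) := Real.sq_sqrt (by positivity)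
      have hb2 : b ^ 2 = ((t - 1 : ℕ) : ℝ) := Real.sq_sqrt (by positivity)
      have hcast : ((t - 1 : ℕ) : ℝ) = (t : ℝ) - 1 := by
        push_cast [Nat.cast_sub ht1]
        ring
      have hapos : 0 < a := hsqrtpos t ht1
      have hbnn : 0 ≤ b := Real.sqrt_nonneg _
      have hkey : 1 / a ≤ 2 * (a - b) := by
        rw [div_le_iff₀ hapos]
        nlinarith [sq_nonneg (a - b), ha2, hb2, hcast]
      linarith
    have htel : ∑ t ∈ Finset.Icc 1 T, (f t - f (t - 1)) = f T - f 0 := by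
      have h2 : ∑ t ∈ Finset.Icc 1 T, (f t - f (t - 1)) =
          -∑ t ∈ Finset.Icc 1 T, (f (t - 1) - f t) := by
        rw [← Finset.sum_neg_distrib]
        exact Finset.sum_congr rfl fun t _ => by ring
      rw [h2, telescope_Icc1 f T]
      ring
    calc ∑ t ∈ Finset.Icc 1 T, η t / 8
        ≤ ∑ t ∈ Finset.Icc 1 T, (f t - f (t - 1)) / 4 := Finset.sum_le_sum hterm
      _ = (∑ t ∈ Finset.Icc 1 T, (f t - f (t - 1))) / 4 := by rw [← Finset.sum_div]
      _ = Real.sqrt T / 4 := by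
          rw [htel]
          simp [hfdef]
  constructor
  · have hLle : L ≤ L / η T := by
      rw [hdiv]
      have h := mul_le_mul_of_nonneg_left hsqT1 hL0
      linarith
    have hS2nn : 0 ≤ ∑ t ∈ Finset.Icc 2 T, (1 / η t - 1 / η (t - 1)) := by
      rw [hS2]; linarith
    linarith [hsum, hψT]
  · rw [hdiv, hS2]
    have hexp2 : L * (Real.sqrt T - 1) = L * Real.sqrt T - L := by ring
    linarith [hS3, hL0, hexp2]

end REW
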